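/- If G is a simple graph with n ≥ 2 vertices such that d(u) + d(v) ≥ n - 1 for each pair of distinct non-adjacent vertices u and v of G, then G contains a Hamiltonian path. -/

import Mathlib

open scoped Classical

namespace OreAux

variable {V : Type*}

/-- A consecutive pair in a list gives a split. -/
lemma split_of_mem_zip : ∀ (l : List V) (y z : V), (y, z) ∈ l.zip l.tail →
    ∃ l₁ l₂, l = l₁ ++ y :: z :: l₂ := by
  intro l
  induction l with
  | nil => simp
  | cons a t ih =>
    intro y z h
    cases t with
    | nil => simp at h
    | cons b t' =>
      simp only [List.tail_cons, List.zip_cons_cons, List.mem_cons, Prod.mk.injEq] at h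
      rcases h with ⟨rfl, rfl⟩ | h
      · exact ⟨[], t', rfl⟩
      · obtain ⟨l₁, l₂, hl⟩ := ih y z (by simpa using h)
        exact ⟨a :: l₁, l₂, by simp [hl]⟩

lemma sum_split (fu fv : V → ℕ) : ∀ (t : List V) (x : V),
    ((x :: t).map fu).sum + ((x :: t).map fv).sum =
      fu ((x :: t).getLast (by simp)) + fv x +
        (((x :: t).zip t).map (fun p => fu p.1 + fv p.2)).sum := by
  intro t
  induction t with
  | nil => intro x; simp
  | cons b t' ih =>
    intro x
    have h := ih b
    have hgl : ((x :: b :: t').getLast (by simp)) = ((b :: t').getLast (by simp)) :=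
      List.getLast_cons (by simp)
    simp only [List.map_cons, List.sum_cons, List.zip_cons_cons] at h ⊢
    rw [hgl]
    omega

lemma sum_bound (G : SimpleGraph V) (u v : V) (l : List V) (hl : l ≠ [])
    (hlast : ¬ G.Adj u (l.getLast hl)) (hhead : ¬ G.Adj v (l.head hl))
    (hpairs : ∀ y z : V, (y, z) ∈ l.zip l.tail → ¬ (G.Adj u y ∧ G.Adj v z)) :
    (l.map fun x => if G.Adj u x then 1 else 0).sum
      + (l.map fun x => if G.Adj v x then 1 else 0).sum ≤ l.length - 1 := by
  obtain ⟨x, t, rfl⟩ := List.exists_cons_of_ne_nil hl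
  rw [sum_split]
  have h1 : (if G.Adj u ((x :: t).getLast (by simp)) then 1 else 0) = 0 := by
    simp [hlast]
  have h2 : (if G.Adj v x then 1 else 0) = 0 := by
    simpa using hhead
  have h3 : (((x :: t).zip t).map
      (fun p => (if G.Adj u p.1 then 1 else 0) + (if G.Adj v p.2 then 1 else 0))).sum
      ≤ (((x :: t).zip t).map
      (fun p => (if G.Adj u p.1 then 1 else 0) + (if G.Adj v p.2 then 1 else 0))).length • 1 := by
    apply List.sum_le_card_nsmul
    intro a ha
    simp only [List.mem_map] at ha
    obtain ⟨p, hp, rfl⟩ := ha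
    have := hpairs p.1 p.2 (by simpa using hp)
    by_cases hu : G.Adj u p.1 <;> by_cases hv : G.Adj v p.2 <;> simp [hu, hv] at this ⊢
  simp only [List.length_map, List.length_zip, smul_eq_mul, mul_one] at h3
  simp only [h1, h2]
  simp only [List.length_cons]
  omega

lemma walk_of_chain (G : SimpleGraph V) : ∀ (l : List V), l ≠ [] → l.Chain' G.Adj →
    ∃ (a b : V) (p : G.Walk a b), p.support = l := by
  intro l
  induction l with
  | nil => simp
  | cons x t ih =>
    intro _ hc
    cases t with
    | nil => exact ⟨x, x, SimpleGraph.Walk.nil, rfl⟩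
    | cons y t' =>
      obtain ⟨a, b, p, hp⟩ := ih (by simp) hc.tail
      have ha : y = a := by
        have h1 := SimpleGraph.Walk.support_eq_cons p
        rw [hp] at h1
        exact (List.cons_eq_cons.mp h1).1
      subst ha
      have hadj : G.Adj x y := (List.isChain_cons_cons.mp hc).1
      exact ⟨x, b, SimpleGraph.Walk.cons hadj p, by simp [hp]⟩

lemma merge [Fintype V] (G : SimpleGraph V) (u v : V)
    (huv : ¬ G.Adj u v)
    (P Q : List V) (hP : P ≠ []) (hQ : Q ≠ [])
    (hPu : P.getLast hP = u) (hQv : Q.head hQ = v)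
    (hcP : P.Chain' G.Adj) (hcQ : Q.Chain' G.Adj)
    (hnd : (P ++ Q).Nodup) (hcov : ∀ x, x ∈ P ++ Q)
    (hdeg : Fintype.card V - 1 ≤ G.degree u + G.degree v) :
    ∃ M : List V, M ≠ [] ∧ M.Nodup ∧ (∀ x, x ∈ M) ∧ M.Chain' G.Adj := by
  classical
  have finish : ∀ M : List V, M.Perm (P ++ Q) → M.Chain' G.Adj →
      ∃ N : List V, N ≠ [] ∧ N.Nodup ∧ (∀ x, x ∈ N) ∧ N.Chain' G.Adj := by
    intro M hperm hchain
    refine ⟨M, ?_, hperm.nodup_iff.mpr hnd, fun x => hperm.mem_iff.mpr (hcov x), hchain⟩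
    intro h
    rw [h] at hperm
    exact hP (List.append_eq_nil_iff.mp hperm.nil_eq.symm).1
  have hsymm : ∀ l : List V, l.Chain' G.Adj → l.reverse.Chain' G.Adj := by
    intro l hl
    apply List.isChain_reverse.mpr
    exact hl.imp fun a b h => h.symm
  have hPlast? : P.getLast? = some u := by rw [List.getLast?_eq_getLast hP, hPu]
  have hQhead? : Q.head? = some v := by rw [List.head?_eq_head hQ, hQv]
  have hQlast? : Q.getLast? = some (Q.getLast hQ) := List.getLast?_eq_getLast hQ
  have hPhead? : P.head? = some (P.head hP) := List.head?_eq_head hP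
  by_cases hC : G.Adj u (Q.getLast hQ)
  · -- M = P ++ Q.reverse
    refine finish (P ++ Q.reverse) ((Q.reverse_perm).append_left P) ?_
    apply List.IsChain.append hcP (hsymm Q hcQ)
    intro x hx y hy
    rw [hPlast?, Option.mem_some_iff] at hx
    rw [List.head?_reverse, hQlast?, Option.mem_some_iff] at hy
    subst hx; subst hy; exact hC
  by_cases hD : G.Adj (P.head hP) v
  · refine finish (P.reverse ++ Q) ((P.reverse_perm).append (List.Perm.refl Q)) ?_
    apply List.IsChain.append (hsymm P hcP) hcQ
    intro x hx y hy
    rw [List.getLast?_reverse, hPhead?, Option.mem_some_iff] at hx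
    rw [hQhead?, Option.mem_some_iff] at hy
    subst hx; subst hy; exact hD
  by_cases hA : ∃ y z l₁ l₂, P = l₁ ++ y :: z :: l₂ ∧ G.Adj u y ∧ G.Adj v z
  · obtain ⟨y, z, l₁, l₂, hPeq, hy, hz⟩ := hA
    have hPsplit : P = (l₁ ++ [y]) ++ z :: l₂ := by simp [hPeq]
    have hcP' : ((l₁ ++ [y]) ++ z :: l₂).Chain' G.Adj := hPsplit ▸ hcP
    have hc1 : (l₁ ++ [y]).Chain' G.Adj := (List.isChain_append.mp hcP').1
    have hc2 : (z :: l₂).Chain' G.Adj := (List.isChain_append.mp hcP').2.1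
    have hlast2 : (z :: l₂).getLast? = some u := by
      rw [← hPlast?, hPsplit, List.getLast?_append_of_ne_nil _ (by simp)]
    refine finish (Q.reverse ++ ((z :: l₂) ++ (l₁ ++ [y]).reverse)) ?_ ?_
    · rw [List.perm_iff_count]
      intro x
      simp only [hPsplit, List.count_append, List.count_reverse]
      try omega
    · apply List.IsChain.append (hsymm Q hcQ)
      · apply List.IsChain.append hc2 (hsymm _ hc1)
        intro x hx w hw
        rw [hlast2, Option.mem_some_iff] at hx
        rw [List.head?_reverse, List.getLast?_append_of_ne_nil _ (by simp : ([y] : List V) ≠ [])] at hw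
        simp only [List.getLast?_singleton, Option.mem_some_iff] at hw
        subst hx; subst hw; exact hy
      · intro x hx w hw
        rw [List.getLast?_reverse, hQhead?, Option.mem_some_iff] at hx
        simp only [List.cons_append, List.head?_cons, Option.mem_some_iff] at hw
        subst hx; subst hw; exact hz
  by_cases hB : ∃ y z l₁ l₂, Q = l₁ ++ y :: z :: l₂ ∧ G.Adj u y ∧ G.Adj v z
  · obtain ⟨y, z, l₁, l₂, hQeq, hy, hz⟩ := hB
    have hQsplit : Q = (l₁ ++ [y]) ++ z :: l₂ := by simp [hQeq]
    have hcQ' : ((l₁ ++ [y]) ++ z :: l₂).Chain' G.Adj := hQsplit ▸ hcQ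
    have hc1 : (l₁ ++ [y]).Chain' G.Adj := (List.isChain_append.mp hcQ').1
    have hc2 : (z :: l₂).Chain' G.Adj := (List.isChain_append.mp hcQ').2.1
    have hhead1 : (l₁ ++ [y]).head? = some v := by
      have h := hQhead?
      rw [hQsplit, List.head?_append_of_ne_nil _ (by simp)] at h
      exact h
    refine finish (P ++ ((l₁ ++ [y]).reverse ++ z :: l₂)) ?_ ?_
    · rw [List.perm_iff_count]
      intro x
      simp only [hQsplit, List.count_append, List.count_reverse]
      try omega
    · apply List.IsChain.append hcP
      · apply List.IsChain.append (hsymm _ hc1) hc2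
        intro x hx w hw
        rw [List.getLast?_reverse, hhead1, Option.mem_some_iff] at hx
        simp only [List.head?_cons, Option.mem_some_iff] at hw
        subst hx; subst hw; exact hz
      · intro x hx w hw
        rw [hPlast?, Option.mem_some_iff] at hx
        rw [List.head?_append_of_ne_nil _ (by simp), List.head?_reverse,
          List.getLast?_append_of_ne_nil _ (by simp : ([y] : List V) ≠ [])] at hw
        simp only [List.getLast?_singleton, Option.mem_some_iff] at hw
        subst hx; subst hw; exact hy
  -- counting contradiction
  · exfalso
    push_neg at hA hB
    have hne : u ≠ v := by
      rintro rfl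
      have hu : u ∈ P := hPu ▸ List.getLast_mem hP
      have hv : u ∈ Q := hQv ▸ List.head_mem hQ
      exact (List.disjoint_of_nodup_append hnd) hu hv
    have hPbound := sum_bound G u v P hP (by rw [hPu]; exact fun h => G.irrefl h)
      (fun h => hD h.symm)
      (fun y z hmem hyz => by
        obtain ⟨l₁, l₂, hsp⟩ := split_of_mem_zip P y z hmem
        exact hA y z l₁ l₂ hsp hyz.1 hyz.2)
    have hQbound := sum_bound G u v Q hQ hC (by rw [hQv]; exact fun h => G.irrefl h)
      (fun y z hmem hyz => by
        obtain ⟨l₁, l₂, hsp⟩ := split_of_mem_zip Q y z hmem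
        exact hB y z l₁ l₂ hsp hyz.1 hyz.2)
    have huniv : (P ++ Q).toFinset = Finset.univ := by
      ext x; simpa using hcov x
    have hsum : ∀ w : V, G.degree w = ((P ++ Q).map fun x => if G.Adj w x then 1 else 0).sum := by
      intro w
      rw [← List.sum_toFinset _ hnd, huniv, SimpleGraph.degree,
        SimpleGraph.neighborFinset_eq_filter, Finset.card_filter]
    have hlen : P.length + Q.length = Fintype.card V := by
      rw [← Finset.card_univ, ← huniv, List.toFinset_card_of_nodup hnd, List.length_append]
    have hP1 : 1 ≤ P.length := List.length_pos_iff.mpr hP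
    have hQ1 : 1 ≤ Q.length := List.length_pos_iff.mpr hQ
    have hdu := hsum u
    have hdv := hsum v
    simp only [List.map_append, List.sum_append] at hdu hdv
    omega


lemma chain_split (G G' : SimpleGraph V) (u v : V)
    (hGG' : ∀ y z : V, G'.Adj y z → G.Adj y z ∨ (y = u ∧ z = v) ∨ (y = v ∧ z = u)) :
    ∀ (l : List V), l.Nodup → l.Chain' G'.Adj →
      l.Chain' G.Adj ∨ ∃ l₁ l₂ y z, l = l₁ ++ y :: z :: l₂ ∧
        ((y = u ∧ z = v) ∨ (y = v ∧ z = u)) ∧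
        (l₁ ++ [y]).Chain' G.Adj ∧ (z :: l₂).Chain' G.Adj := by
  intro l
  induction l with
  | nil => intro _ _; left; exact List.isChain_nil
  | cons x t ih =>
    intro hnd hc
    cases t with
    | nil => left; exact List.isChain_singleton _
    | cons b t' =>
      have hG'xb : G'.Adj x b := (List.isChain_cons_cons.mp hc).1
      have hxmem : x ∉ b :: t' := (List.nodup_cons.mp hnd).1
      rcases ih (List.Nodup.of_cons hnd) hc.tail with h | ⟨l₁, l₂, y, z, heq, hyz, hc1, hc2⟩
      · by_cases hadj : G.Adj x b
        · left; exact List.isChain_cons_cons.mpr ⟨hadj, h⟩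
        · right
          refine ⟨[], t', x, b, rfl, ?_, List.isChain_singleton _, h⟩
          rcases hGG' _ _ hG'xb with h' | h' | h'
          · exact absurd h' hadj
          · exact Or.inl h'
          · exact Or.inr h'
      · have hy : y ∈ b :: t' := by rw [heq]; simp
        have hz : z ∈ b :: t' := by rw [heq]; simp
        have hxb : G.Adj x b := by
          rcases hGG' _ _ hG'xb with h' | ⟨rfl, rfl⟩ | ⟨rfl, rfl⟩
          · exact h'
          · rcases hyz with ⟨rfl, rfl⟩ | ⟨rfl, rfl⟩
            · exact absurd hy hxmem
            · exact absurd hz hxmem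
          · rcases hyz with ⟨rfl, rfl⟩ | ⟨rfl, rfl⟩
            · exact absurd hz hxmem
            · exact absurd hy hxmem
        right
        refine ⟨x :: l₁, l₂, y, z, by simp [heq], hyz, ?_, hc2⟩
        have hhd : (l₁ ++ [y]).head? = some b := by
          cases l₁ with
          | nil =>
            have : y = b := by
              have := (List.cons_eq_cons.mp heq.symm)
              simpa using this.1
            simp [this]
          | cons c l₁' =>
            have : c = b := by
              have := (List.cons_eq_cons.mp heq.symm)
              simpa using this.1
            simp [this]
        rw [List.cons_append]
        apply List.isChain_cons.mpr
        refine ⟨?_, hc1⟩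
        intro w hw
        rw [hhd, Option.mem_some_iff] at hw
        subst hw
        exact hxb

lemma complete_ham_list [Fintype V] [Nonempty V] (G : SimpleGraph V)
    (hcomp : ∀ x y : V, x ≠ y → G.Adj x y) :
    ∃ l : List V, l ≠ [] ∧ l.Nodup ∧ (∀ x, x ∈ l) ∧ l.Chain' G.Adj := by
  classical
  refine ⟨Finset.univ.toList, ?_, Finset.nodup_toList _, fun x => by simp, ?_⟩
  · intro h
    have h1 : (Finset.univ : Finset V).toList.length = Fintype.card V := by
      rw [Finset.length_toList, Finset.card_univ]
    rw [h] at h1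
    simp at h1
    exact Fintype.card_ne_zero h1.symm
  · have hnd : (Finset.univ.toList : List V).Nodup := Finset.nodup_toList _
    have hpw : (Finset.univ.toList : List V).Pairwise G.Adj :=
      hnd.imp_of_mem (fun _ _ h => hcomp _ _ h)
    exact hpw.isChain

lemma ham_list [Fintype V] (n : ℕ) (hn : 2 ≤ n) (hcard : Fintype.card V = n) :
    ∀ (m : ℕ) (G : SimpleGraph V), Gᶜ.edgeFinset.card ≤ m →
      (∀ u v : V, u ≠ v → ¬ G.Adj u v → n - 1 ≤ G.degree u + G.degree v) →
      ∃ l : List V, l ≠ [] ∧ l.Nodup ∧ (∀ x, x ∈ l) ∧ l.Chain' G.Adj := by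
  classical
  have : Nonempty V := by
    rw [← Fintype.card_pos_iff, hcard]; omega
  intro m
  induction m with
  | zero =>
    intro G hm _
    apply complete_ham_list
    intro x y hxy
    by_contra hadj
    have : s(x, y) ∈ Gᶜ.edgeFinset := by
      rw [SimpleGraph.mem_edgeFinset, SimpleGraph.mem_edgeSet]
      exact ⟨hxy, hadj⟩
    have := Finset.card_pos.mpr ⟨_, this⟩
    omega
  | succ m ih =>
    intro G hm hdeg
    by_cases hcomp : ∀ x y : V, x ≠ y → G.Adj x y
    · exact complete_ham_list G hcomp
    push_neg at hcomp
    obtain ⟨u, v, hne, huv⟩ := hcomp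
    obtain ⟨G', hG'adj⟩ : ∃ G' : SimpleGraph V,
        ∀ a b : V, G'.Adj a b ↔ G.Adj a b ∨ (a = u ∧ b = v) ∨ (a = v ∧ b = u) := by
      refine ⟨G ⊔ SimpleGraph.fromEdgeSet {s(u, v)}, fun a b => ?_⟩
      rw [SimpleGraph.sup_adj, SimpleGraph.fromEdgeSet_adj]
      simp only [Set.mem_singleton_iff, Sym2.eq_iff]
      constructor
      · rintro (h | ⟨(⟨rfl, rfl⟩ | ⟨rfl, rfl⟩), hab⟩)
        · exact Or.inl h
        · exact Or.inr (Or.inl ⟨rfl, rfl⟩)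
        · exact Or.inr (Or.inr ⟨rfl, rfl⟩)
      · rintro (h | ⟨rfl, rfl⟩ | ⟨rfl, rfl⟩)
        · exact Or.inl h
        · exact Or.inr ⟨Or.inl ⟨rfl, rfl⟩, hne⟩
        · exact Or.inr ⟨Or.inr ⟨rfl, rfl⟩, hne.symm⟩
    have hmono : G ≤ G' := fun a b h => (hG'adj a b).mpr (Or.inl h)
    have hdegmono : ∀ x : V, G.degree x ≤ G'.degree x := by
      intro x
      apply Finset.card_le_card
      intro w hw
      rw [SimpleGraph.mem_neighborFinset] at hw ⊢
      exact hmono hw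
    have hdeg' : ∀ a b : V, a ≠ b → ¬ G'.Adj a b → n - 1 ≤ G'.degree a + G'.degree b := by
      intro a b hab hnadj
      have : ¬ G.Adj a b := fun h => hnadj (hmono h)
      calc n - 1 ≤ G.degree a + G.degree b := hdeg a b hab this
        _ ≤ G'.degree a + G'.degree b := Nat.add_le_add (hdegmono a) (hdegmono b)
    have hsub : G'ᶜ.edgeFinset ⊆ Gᶜ.edgeFinset :=
      SimpleGraph.edgeFinset_mono (compl_le_compl hmono)
    have hmem : s(u, v) ∈ Gᶜ.edgeFinset := by
      rw [SimpleGraph.mem_edgeFinset, SimpleGraph.mem_edgeSet]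
      exact ⟨hne, huv⟩
    have hnotmem : s(u, v) ∉ G'ᶜ.edgeFinset := by
      rw [SimpleGraph.mem_edgeFinset, SimpleGraph.mem_edgeSet]
      intro h
      exact h.2 ((hG'adj u v).mpr (Or.inr (Or.inl ⟨rfl, rfl⟩)))
    have hlt : G'ᶜ.edgeFinset.card < Gᶜ.edgeFinset.card :=
      Finset.card_lt_card ((Finset.ssubset_iff_of_subset hsub).mpr ⟨_, hmem, hnotmem⟩)
    obtain ⟨l, hlne, hlnd, hlcov, hlchain⟩ := ih G' (by omega) hdeg'
    rcases chain_split G G' u v (fun y z h => (hG'adj y z).mp h) l hlnd hlchain with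
      h | ⟨l₁, l₂, y, z, heq, hyz, hc1, hc2⟩
    · exact ⟨l, hlne, hlnd, hlcov, h⟩
    · have hndl : ((l₁ ++ [y]) ++ z :: l₂).Nodup := by
        rw [List.append_assoc, List.singleton_append, ← heq]
        exact hlnd
      have hcovl : ∀ x, x ∈ (l₁ ++ [y]) ++ z :: l₂ := by
        intro x
        rw [List.append_assoc, List.singleton_append, ← heq]
        exact hlcov x
      have hyzadj : ¬ G.Adj y z := by
        rcases hyz with ⟨rfl, rfl⟩ | ⟨rfl, rfl⟩
        · exact huv
        · exact fun h => huv h.symm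
      have hdegyz : Fintype.card V - 1 ≤ G.degree y + G.degree z := by
        rw [hcard]
        rcases hyz with ⟨rfl, rfl⟩ | ⟨rfl, rfl⟩
        · exact hdeg y z hne hyzadj
        · rw [add_comm]
          exact hdeg z y hne (fun h => hyzadj h.symm)
      exact merge G y z hyzadj (l₁ ++ [y]) (z :: l₂) (by simp) (by simp)
        (List.getLast_append _) rfl hc1 hc2 hndl hcovl hdegyz

end OreAux


theorem ore_hamiltonian_path
    {V : Type*} [Fintype V] (n : ℕ) (hn : 2 ≤ n) (hcard : Fintype.card V = n)
    (G : SimpleGraph V)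
    (hdeg : ∀ u v : V, u ≠ v → ¬ G.Adj u v →
      n - 1 ≤ G.degree u + G.degree v) :
    ∃ (u v : V) (p : G.Walk u v), p.IsHamiltonian := by
  classical
  obtain ⟨l, hlne, hlnd, hlcov, hlchain⟩ :=
    OreAux.ham_list n hn hcard Gᶜ.edgeFinset.card G le_rfl hdeg
  obtain ⟨a, b, p, hp⟩ := OreAux.walk_of_chain G l hlne hlchain
  refine ⟨a, b, p, fun x => ?_⟩
  rw [hp]
  exact List.count_eq_one_of_mem hlnd (hlcov x)
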